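/- Let T be a torus with an algebraic automorphism σ of finite order n, over an algebraically closed field of characteristic p ≥ 0. Then the component group T^σ / (T^σ)⁰ is isomorphic to the p'-part (prime-to-p part) of the finite abelian group Ker(1 + σ + ... + σ^{n-1} | X(T)) / (σ - 1)X(T). In particular its exponent divides n. -/

import Mathlib

/-! Torus model as in the other files: `T = Hom(X, kˣ)` with `X` the character
lattice; `σ` acts by precomposition; the identity component is the maximal divisible
subgroup. -/

abbrev TorusPts (X : Type*) [AddCommGroup X] (k : Type*) [Field k] :=
  X →+ Additive kˣ

def precomp {X : Type*} [AddCommGroup X] (k : Type*) [Field k] (f : X →+ X) :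
    TorusPts X k →+ TorusPts X k where
  toFun t := t.comp f
  map_zero' := by ext x; simp
  map_add' t s := by ext x; simp

def fixedSub {X : Type*} [AddCommGroup X] (k : Type*) [Field k] (σ : X →+ X) :
    AddSubgroup (TorusPts X k) :=
  AddMonoidHom.ker (precomp k σ - AddMonoidHom.id _)

def divPart (A : Type*) [AddCommGroup A] : AddSubgroup A :=
  ⨆ H ∈ {H : AddSubgroup A | ∀ m : ℕ, 0 < m → ∀ x ∈ H, ∃ y ∈ H, m • y = x}, H


namespace CGAux

variable {k : Type*} [Field k] [IsAlgClosed k]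

lemma exists_nsmul_eq (u : Additive kˣ) {m : ℕ} (hm : m ≠ 0) :
    ∃ v : Additive kˣ, m • v = u := by
  obtain ⟨z, hz⟩ := IsAlgClosed.exists_pow_nat_eq ((u.toMul : kˣ) : k) (Nat.pos_of_ne_zero hm)
  have hz0 : z ≠ 0 := by
    intro h
    rw [h, zero_pow hm] at hz
    exact (u.toMul).ne_zero hz.symm
  refine ⟨Additive.ofMul (Units.mk0 z hz0), ?_⟩
  apply Additive.toMul.injective
  rw [toMul_nsmul]
  ext
  simpa using hz

noncomputable instance : DivisibleBy (Additive kˣ) ℕ :=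
  divisibleByOfSMulRightSurj _ _ (fun {m} hm u => (exists_nsmul_eq u hm).imp (fun _ h => h))

noncomputable instance : DivisibleBy (Additive kˣ) ℤ :=
  AddGroup.divisibleByIntOfDivisibleByNat _

lemma baerA : Module.Baer ℤ (Additive kˣ) := Module.Baer.of_divisible _

end CGAux
namespace CGAux
variable {k : Type*} [Field k]

lemma not_char_dvd_mul {a b : ℕ} (ha : ¬ ringChar k ∣ a) (hb : ¬ ringChar k ∣ b) :
    ¬ ringChar k ∣ a * b := by
  rcases CharP.char_is_prime_or_zero k (ringChar k) with hp | h0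
  · intro h
    rcases (Nat.Prime.dvd_mul hp).mp h with h | h
    exacts [ha h, hb h]
  · rw [h0] at ha hb ⊢
    simp only [zero_dvd_iff] at ha hb ⊢
    exact mul_ne_zero ha hb

lemma not_char_dvd_one : ¬ ringChar k ∣ (1 : ℕ) := by
  intro h
  exact CharP.char_ne_one k (ringChar k) (Nat.dvd_one.mp h)

/-- The p'-part of an abelian group, relative to the characteristic of `k`. -/
def pPart (k : Type*) [Field k] (B : Type*) [AddCommGroup B] : AddSubgroup B where
  carrier := {q | ∃ m : ℕ, 0 < m ∧ ¬ (ringChar k ∣ m) ∧ m • q = 0}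
  zero_mem' := ⟨1, one_pos, not_char_dvd_one, smul_zero 1⟩
  add_mem' := by
    rintro a b ⟨m₁, hm₁, hp₁, he₁⟩ ⟨m₂, hm₂, hp₂, he₂⟩
    refine ⟨m₁ * m₂, Nat.mul_pos hm₁ hm₂, not_char_dvd_mul hp₁ hp₂, ?_⟩
    have h1 : (m₁ * m₂) • a = 0 := by rw [mul_comm, mul_smul, he₁, smul_zero]
    have h2 : (m₁ * m₂) • b = 0 := by rw [mul_smul, he₂, smul_zero]
    rw [smul_add, h1, h2, add_zero]
  neg_mem' := by
    rintro a ⟨m, hm, hp, he⟩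
    exact ⟨m, hm, hp, by rw [smul_neg, he, neg_zero]⟩

lemma mem_pPart {B : Type*} [AddCommGroup B] {q : B} :
    q ∈ pPart k B ↔ ∃ m : ℕ, 0 < m ∧ ¬ (ringChar k ∣ m) ∧ m • q = 0 := Iff.rfl

end CGAux


namespace CGAux

variable {X : Type*} [AddCommGroup X]

lemma aut_mul_apply (f g : AddAut X) (x : X) : (f + g) x = f (g x) := rfl

lemma Nm_apply (σ : AddAut X) (n : ℕ) (x : X) :
    (∑ i ∈ Finset.range n, ((i • σ : AddAut X) : X →+ X)) x
      = ∑ i ∈ Finset.range n, (i • σ) x := by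
  rw [AddMonoidHom.finset_sum_apply]
  rfl

lemma sub_id_apply (σ : AddAut X) (y : X) :
    (((σ : AddAut X) : X →+ X) - AddMonoidHom.id X) y = σ y - y := rfl

lemma Ir_le_Kk (σ : AddAut X) (n : ℕ) (hord : n • σ = 0) :
    AddMonoidHom.range (((σ : AddAut X) : X →+ X) - AddMonoidHom.id X)
      ≤ AddMonoidHom.ker (∑ i ∈ Finset.range n, ((i • σ : AddAut X) : X →+ X)) := by
  rintro _ ⟨y, rfl⟩
  rw [AddMonoidHom.mem_ker, sub_id_apply, map_sub, Nm_apply, Nm_apply,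
    ← Finset.sum_sub_distrib]
  have : ∀ i ∈ Finset.range n, (i • σ) (σ y) - (i • σ) y
      = (fun i => (i • σ) y) (i + 1) - (fun i => (i • σ) y) i := by
    intro i _
    simp only [succ_nsmul, aut_mul_apply]
  rw [Finset.sum_congr rfl this, Finset.sum_range_sub (fun i => (i • σ) y), hord]
  simp

lemma nsmul_mem_Ir (σ : AddAut X) (n : ℕ) {x : X}
    (hx : (∑ i ∈ Finset.range n, ((i • σ : AddAut X) : X →+ X)) x = 0) :
    n • x ∈ AddMonoidHom.range (((σ : AddAut X) : X →+ X) - AddMonoidHom.id X) := by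
  refine ⟨-∑ i ∈ Finset.range n, ∑ j ∈ Finset.range i, (j • σ) x, ?_⟩
  have key : ∀ i : ℕ, σ (∑ j ∈ Finset.range i, (j • σ) x) - (∑ j ∈ Finset.range i, (j • σ) x)
      = (i • σ) x - x := by
    intro i
    rw [map_sum, ← Finset.sum_sub_distrib]
    have : ∀ j ∈ Finset.range i, σ ((j • σ) x) - (j • σ) x
        = (fun j => (j • σ) x) (j + 1) - (fun j => (j • σ) x) j := by
      intro j _
      simp only [succ_nsmul', aut_mul_apply]
    rw [Finset.sum_congr rfl this, Finset.sum_range_sub (fun j => (j • σ) x)]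
    simp
  rw [sub_id_apply, map_neg, map_sum, neg_sub_neg, ← Finset.sum_sub_distrib]
  have : ∀ i ∈ Finset.range n, (∑ j ∈ Finset.range i, (j • σ) x)
      - σ (∑ j ∈ Finset.range i, (j • σ) x) = x - (i • σ) x := by
    intro i _
    rw [← neg_sub, key i, neg_sub]
  rw [Finset.sum_congr rfl this, Finset.sum_sub_distrib]
  rw [Nm_apply] at hx
  rw [hx, sub_zero, Finset.sum_const, Finset.card_range]

end CGAux

namespace CGAux

variable {k : Type*} [Field k] {X : Type*} [AddCommGroup X]

lemma mem_fixedSub {g : X →+ X} {t : TorusPts X k} :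
    t ∈ fixedSub k g ↔ ∀ x, t (g x) = t x := by
  rw [fixedSub, AddMonoidHom.mem_ker]
  constructor
  · intro h x
    have := DFunLike.congr_fun h x
    simpa [precomp, sub_eq_zero] using this
  · intro h
    ext x
    simp [precomp, h x]

abbrev Kk (σ : AddAut X) (n : ℕ) : AddSubgroup X :=
  AddMonoidHom.ker (∑ i ∈ Finset.range n, ((i • σ : AddAut X) : X →+ X))

abbrev Ir (σ : AddAut X) : AddSubgroup X :=
  AddMonoidHom.range (((σ : AddAut X) : X →+ X) - AddMonoidHom.id X)

abbrev QT (σ : AddAut X) (n : ℕ) := ↥(Kk σ n) ⧸ (Ir σ).addSubgroupOf (Kk σ n)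

variable (k) in
abbrev Tfix (σ : AddAut X) : AddSubgroup (TorusPts X k) :=
  fixedSub k ((σ : AddAut X) : X →+ X)

lemma fix_vanish_Ir {σ : AddAut X} (t : ↥(Tfix k σ)) {x : X} (hx : x ∈ Ir σ) :
    (t : TorusPts X k) x = 0 := by
  obtain ⟨y, rfl⟩ := hx
  have ht := (mem_fixedSub.mp t.2) y
  show (t : TorusPts X k) (σ y - y) = 0
  rw [map_sub, sub_eq_zero]
  exact ht

def rQ (σ : AddAut X) (n : ℕ) (t : ↥(Tfix k σ)) : QT σ n →+ Additive kˣ :=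
  QuotientAddGroup.lift _ ((t : TorusPts X k).comp (Kk σ n).subtype)
    (fun x hx => fix_vanish_Ir t ((AddSubgroup.mem_addSubgroupOf).mp hx))

lemma rQ_mk {σ : AddAut X} {n : ℕ} (t : ↥(Tfix k σ)) (x : ↥(Kk σ n)) :
    rQ σ n t (QuotientAddGroup.mk x) = (t : TorusPts X k) x := rfl

variable (k) in
def Pp (σ : AddAut X) (n : ℕ) : AddSubgroup (QT σ n) := pPart k _

noncomputable def resP (σ : AddAut X) (n : ℕ) :
    ↥(Tfix k σ) →+ (↥(Pp k σ n) →+ Additive kˣ) where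
  toFun t := (rQ σ n t).comp (Pp k σ n).subtype
  map_zero' := by
    ext ⟨q, hq⟩
    revert hq
    refine QuotientAddGroup.induction_on q (fun x => ?_)
    intro hq
    simp [rQ_mk]
  map_add' t s := by
    ext ⟨q, hq⟩
    revert hq
    refine QuotientAddGroup.induction_on q (fun x => ?_)
    intro hq
    simp [rQ_mk]

lemma resP_apply {σ : AddAut X} {n : ℕ} (t : ↥(Tfix k σ)) (q : ↥(Pp k σ n)) :
    resP σ n t q = rQ σ n t q.1 := rfl

end CGAux

namespace CGAux

variable {k : Type*} [Field k] {X : Type*} [AddCommGroup X]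

lemma nsmul_QT_eq_zero {σ : AddAut X} {n : ℕ} (q : QT σ n) : n • q = 0 := by
  refine QuotientAddGroup.induction_on q (fun x => ?_)
  have : ((n • x : ↥(Kk σ n)) : X) ∈ Ir σ := by
    simpa using nsmul_mem_Ir σ n (AddMonoidHom.mem_ker.mp x.2)
  rw [← QuotientAddGroup.mk_nsmul, QuotientAddGroup.eq_zero_iff,
    AddSubgroup.mem_addSubgroupOf]
  exact this

lemma finite_QT [Module.Finite ℤ X] (σ : AddAut X) (n : ℕ) (hn : 0 < n) :
    Finite (QT σ n) := by
  haveI : IsNoetherian ℤ X := isNoetherian_of_isNoetherianRing_of_finite ℤ X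
  have h1 : ((Kk σ n).toIntSubmodule).FG := IsNoetherian.noetherian _
  have h2 : (Kk σ n).FG := by
    have := (Submodule.fg_iff_addSubgroup_fg _).mp h1
    rwa [AddSubgroup.toIntSubmodule_toAddSubgroup] at this
  haveI h3 : AddGroup.FG ↥(Kk σ n) := (AddGroup.fg_iff_addSubgroup_fg _).mpr h2
  haveI h4 : AddGroup.FG (QT σ n) :=
    AddGroup.fg_of_surjective (f := QuotientAddGroup.mk' _) (QuotientAddGroup.mk'_surjective _)
  exact AddCommGroup.finite_of_fg_torsion _
    (fun q => isOfFinAddOrder_iff_nsmul_eq_zero.mpr ⟨n, hn, nsmul_QT_eq_zero q⟩)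

/-- Characters killed on the `p'`-part are killed on all of `Ker N`. -/
lemma vanish_of_resP_eq_zero {σ : AddAut X} {n : ℕ} (hn : 0 < n) (t : ↥(Tfix k σ))
    (ht : resP σ n t = 0) (q : QT σ n) : rQ σ n t q = 0 := by
  have hP0 : ∀ q : QT σ n, q ∈ Pp k σ n → rQ σ n t q = 0 := by
    intro q hq
    have := DFunLike.congr_fun ht (⟨q, hq⟩ : ↥(Pp k σ n))
    simpa [resP_apply] using this
  rcases CharP.char_is_prime_or_zero k (ringChar k) with hp | h0
  · -- char = p prime
    set p := ringChar k with hpdef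
    obtain ⟨a, n', hn', hfac⟩ := Nat.exists_eq_pow_mul_and_not_dvd hn.ne' p hp.ne_one
    have hn'0 : 0 < n' := by
      rcases Nat.eq_zero_or_pos n' with h | h
      · exact absurd (h ▸ hn') (by simp)
      · exact h
    have hcop : IsCoprime ((p ^ a : ℕ) : ℤ) ((n' : ℕ) : ℤ) :=
      Nat.isCoprime_iff_coprime.mpr (Nat.Coprime.pow_left a ((Nat.Prime.coprime_iff_not_dvd hp).mpr hn'))
    obtain ⟨c, d, hcd⟩ := hcop
    have hq1 : ((p ^ a : ℕ) • q) ∈ Pp k σ n := by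
      refine ⟨n', hn'0, hn', ?_⟩
      rw [← mul_smul, mul_comm, ← hfac]
      exact nsmul_QT_eq_zero q
    have hq2 : rQ σ n t ((n' : ℕ) • q) = 0 := by
      -- it is p^a-torsion in kˣ, char p
      set u : Additive kˣ := rQ σ n t ((n' : ℕ) • q) with hu
      have hker : (p ^ a) • u = 0 := by
        rw [hu, ← map_nsmul, ← mul_smul, ← hfac]
        rw [nsmul_QT_eq_zero q, map_zero]
      -- now in units
      haveI : Fact p.Prime := ⟨hp⟩
      haveI : CharP k p := ringChar.charP k
      have hk1 : ((u.toMul : kˣ) : k) ^ (p ^ a) = 1 := by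
        have := congrArg (fun (v : Additive kˣ) => ((v.toMul : kˣ) : k)) hker
        simpa [toMul_nsmul, Units.val_pow_eq_pow_val] using this
      have hsub : (((u.toMul : kˣ) : k) - 1) ^ (p ^ a) = 0 := by
        rw [sub_pow_char_pow, hk1, one_pow, sub_self]
      have : ((u.toMul : kˣ) : k) = 1 := by
        have h5 := pow_eq_zero_iff (n := p ^ a) (pow_ne_zero a hp.ne_zero) |>.mp hsub
        rwa [sub_eq_zero] at h5
      have : u.toMul = 1 := Units.ext (by simpa using this)
      calc u = Additive.ofMul u.toMul := rfl
        _ = 0 := by rw [this]; rfl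
    have : q = c • ((p ^ a : ℕ) • q) + d • ((n' : ℕ) • q) := by
      calc q = ((c * ((p ^ a : ℕ) : ℤ) + d * ((n' : ℕ) : ℤ))) • q := by rw [hcd, one_zsmul]
        _ = c • (((p ^ a : ℕ) : ℤ) • q) + d • (((n' : ℕ) : ℤ) • q) := by
              rw [add_zsmul, mul_zsmul, mul_zsmul]
        _ = c • ((p ^ a : ℕ) • q) + d • ((n' : ℕ) • q) := by rw [natCast_zsmul, natCast_zsmul]
    rw [this, map_add, map_zsmul, map_zsmul, hP0 _ hq1, hq2, smul_zero, smul_zero, add_zero]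
  · -- char 0
    refine hP0 q ⟨n, hn, ?_, nsmul_QT_eq_zero q⟩
    rw [h0]
    simpa using hn.ne'

end CGAux

namespace CGAux

variable {k : Type*} [Field k] {X : Type*} [AddCommGroup X]

lemma exists_div [IsAlgClosed k] [Module.Free ℤ X] [Module.Finite ℤ X] {σ : AddAut X} {n : ℕ}
    (hord : n • σ = 0) (t : ↥(Tfix k σ)) (hker : ∀ x : ↥(Kk σ n), (t : TorusPts X k) x.1 = 0)
    {m : ℕ} (hm : m ≠ 0) :
    ∃ s : ↥(Tfix k σ), (∀ x : ↥(Kk σ n), (s : TorusPts X k) x.1 = 0) ∧ m • s = t := by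
  classical
  set KS : Submodule ℤ X := AddSubgroup.toIntSubmodule (Kk σ n) with hKS
  have memKS : ∀ x : X, x ∈ KS ↔ x ∈ Kk σ n := fun x => Iff.rfl
  haveI : NoZeroSMulDivisors ℤ (X ⧸ KS) := by
    refine ⟨fun {c x} h => ?_⟩
    rcases eq_or_ne c 0 with hc | hc
    · exact Or.inl hc
    right
    obtain ⟨y, rfl⟩ := Submodule.Quotient.mk_surjective KS x
    rw [← Submodule.Quotient.mk_smul, Submodule.Quotient.mk_eq_zero] at h
    have h2 : c • ((∑ i ∈ Finset.range n, ((i • σ : AddAut X) : X →+ X)) y) = 0 := by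
      rw [← map_zsmul]
      exact AddMonoidHom.mem_ker.mp ((memKS _).mp h)
    rw [Submodule.Quotient.mk_eq_zero, memKS, AddMonoidHom.mem_ker]
    rcases smul_eq_zero.mp h2 with h3 | h3
    · exact absurd h3 hc
    · exact h3
  let b := Module.Free.chooseBasis ℤ (X ⧸ KS)
  have hKle : KS ≤ LinearMap.ker (AddMonoidHom.toIntLinearMap (t : TorusPts X k)) := by
    intro x hx
    exact hker ⟨x, (memKS x).mp hx⟩
  let tl : (X ⧸ KS) →ₗ[ℤ] Additive kˣ := KS.liftQ _ hKle
  choose v hv using fun i => exists_nsmul_eq (tl (b i)) hm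
  let sl : (X ⧸ KS) →ₗ[ℤ] Additive kˣ := b.constr ℤ v
  have hslt : ((m : ℤ) • sl) = tl := by
    refine b.ext (fun i => ?_)
    rw [LinearMap.smul_apply, Module.Basis.constr_basis, natCast_zsmul, hv]
  have hsl : ∀ z, m • sl z = tl z := by
    intro z
    calc m • sl z = ((m : ℤ) • sl) z := by rw [LinearMap.smul_apply, natCast_zsmul]
      _ = tl z := by rw [hslt]
  let s : TorusPts X k := (sl.comp KS.mkQ).toAddMonoidHom
  have hsK : ∀ x : X, x ∈ Kk σ n → s x = 0 := by
    intro x hx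
    show sl (KS.mkQ x) = 0
    have : KS.mkQ x = 0 := (Submodule.Quotient.mk_eq_zero KS).mpr ((memKS x).mpr hx)
    rw [this, map_zero]
  have hsT : s ∈ Tfix k σ := by
    rw [mem_fixedSub]
    intro x
    have hmem : σ x - x ∈ Kk σ n := Ir_le_Kk σ n hord ⟨x, rfl⟩
    have h0 := hsK _ hmem
    rw [map_sub, sub_eq_zero] at h0
    exact h0
  refine ⟨⟨s, hsT⟩, fun x => hsK x.1 x.2, ?_⟩
  apply Subtype.ext
  have hcoe : ((m • (⟨s, hsT⟩ : ↥(Tfix k σ)) : ↥(Tfix k σ)) : TorusPts X k) = m • s := rfl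
  rw [hcoe]
  ext x : 1
  show m • (s x) = (t : TorusPts X k) x
  have : s x = sl (KS.mkQ x) := rfl
  rw [this, hsl]
  rfl

lemma resP_surjective [IsAlgClosed k] (σ : AddAut X) (n : ℕ) :
    Function.Surjective (resP (k := k) σ n) := by
  intro χ
  let jhat : QT σ n →+ X ⧸ (Ir σ) :=
    QuotientAddGroup.map _ _ (Kk σ n).subtype (fun x hx => hx)
  have hjhat : Function.Injective jhat := by
    rw [injective_iff_map_eq_zero]
    intro a
    refine QuotientAddGroup.induction_on a (fun x => ?_)
    intro hx
    change ((x : X) : X ⧸ Ir σ) = 0 at hx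
    rw [QuotientAddGroup.eq_zero_iff] at hx
    rw [QuotientAddGroup.eq_zero_iff, AddSubgroup.mem_addSubgroupOf]
    exact hx
  have hj : Function.Injective (jhat.comp (Pp k σ n).subtype) :=
    hjhat.comp Subtype.coe_injective
  obtain ⟨h, hh⟩ := (baerA (k := k)).extension_property_addMonoidHom
    (jhat.comp (Pp k σ n).subtype) hj χ
  let t : TorusPts X k := h.comp (QuotientAddGroup.mk' (Ir σ))
  have ht : t ∈ Tfix k σ := by
    rw [mem_fixedSub]
    intro x
    show h (QuotientAddGroup.mk' (Ir σ) (σ x)) = h (QuotientAddGroup.mk' (Ir σ) x)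
    congr 1
    rw [QuotientAddGroup.mk'_eq_mk']
    refine ⟨-(σ x - x), neg_mem ⟨x, rfl⟩, ?_⟩
    abel
  refine ⟨⟨t, ht⟩, ?_⟩
  ext q
  obtain ⟨q, hq⟩ := q
  revert hq
  refine QuotientAddGroup.induction_on q (fun x => ?_)
  intro hq
  have hcf := DFunLike.congr_fun hh (⟨QuotientAddGroup.mk x, hq⟩ : ↥(Pp k σ n))
  rw [resP_apply, rQ_mk, ← hcf]
  rfl

end CGAux

namespace CGAux

variable {k : Type*} [Field k]

lemma dual_equiv [IsAlgClosed k] {B : Type*} [AddCommGroup B] [Finite B]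
    (hB : ∀ b : B, ∃ m : ℕ, 0 < m ∧ ¬ ringChar k ∣ m ∧ m • b = 0) :
    Nonempty ((B →+ Additive kˣ) ≃+ B) := by
  classical
  have hexp : ¬ ringChar k ∣ Monoid.exponent (Multiplicative B) := by
    intro hdvd
    rcases CharP.char_is_prime_or_zero k (ringChar k) with hp | h0
    · haveI : Fact (ringChar k).Prime := ⟨hp⟩
      haveI := Fintype.ofFinite (Multiplicative B)
      have hcard : ringChar k ∣ Fintype.card (Multiplicative B) :=
        hdvd.trans Group.exponent_dvd_card
      obtain ⟨g, hg⟩ := exists_prime_orderOf_dvd_card (ringChar k) hcard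
      obtain ⟨m, hm, hmp, hmq⟩ := hB g.toAdd
      have hpow : g ^ m = 1 := by
        apply Multiplicative.toAdd.injective
        simpa using hmq
      have : orderOf g ∣ m := orderOf_dvd_of_pow_eq_one hpow
      exact hmp (hg ▸ this)
    · rw [h0] at hdvd
      exact Monoid.exponent_ne_zero_of_finite (zero_dvd_iff.mp hdvd)
  haveI : NeZero ((Monoid.exponent (Multiplicative B) : k)) :=
    ⟨by rw [Ne, CharP.cast_eq_zero_iff k (ringChar k)]; exact hexp⟩
  obtain ⟨e⟩ := CommGroup.monoidHom_mulEquiv_of_hasEnoughRootsOfUnity (Multiplicative B) k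
  let E : (B →+ Additive kˣ) ≃ B :=
    (AddMonoidHom.toMultiplicativeLeft).trans (e.toEquiv.trans Multiplicative.toAdd)
  have hmul : ∀ χ ψ : B →+ Additive kˣ, AddMonoidHom.toMultiplicativeLeft (χ + ψ)
      = AddMonoidHom.toMultiplicativeLeft χ * AddMonoidHom.toMultiplicativeLeft ψ := by
    intro χ ψ
    ext x
    rfl
  refine ⟨AddEquiv.mk' E (fun χ ψ => ?_)⟩
  show (e (AddMonoidHom.toMultiplicativeLeft (χ + ψ))).toAdd
      = (e (AddMonoidHom.toMultiplicativeLeft χ)).toAdd + (e (AddMonoidHom.toMultiplicativeLeft ψ)).toAdd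
  rw [hmul, map_mul]
  rfl

end CGAux

/-- Let `T` be a torus over an algebraically closed field of
characteristic `p ≥ 0` with an automorphism `σ` of finite order `n`.  Then the
component group `T^σ / (T^σ)⁰` is isomorphic to the `p'`-part of the finite abelian
group `Ker(1 + σ + ⋯ + σ^{n-1} | X(T)) / (σ - 1) X(T)`; in particular, its exponent
divides `n`. -/
theorem component_group_fixed_iso_pprime_part
    {k : Type*} [Field k] [IsAlgClosed k]
    {X : Type*} [AddCommGroup X] [Module.Free ℤ X] [Module.Finite ℤ X]
    (σ : AddAut X) (n : ℕ) (hn : 0 < n) (hord : addOrderOf σ = n) :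
    (∃ φ : (↥(fixedSub k ((σ : AddAut X) : X →+ X)) ⧸
          (AddSubgroup.map (fixedSub k ((σ : AddAut X) : X →+ X)).subtype
              (divPart (fixedSub k ((σ : AddAut X) : X →+ X)))).addSubgroupOf
            (fixedSub k ((σ : AddAut X) : X →+ X))) →+
        (↥(AddMonoidHom.ker (∑ i ∈ Finset.range n, ((i • σ : AddAut X) : X →+ X))) ⧸
          (AddMonoidHom.range (((σ : AddAut X) : X →+ X) - AddMonoidHom.id X)).addSubgroupOf
            (AddMonoidHom.ker (∑ i ∈ Finset.range n, ((i • σ : AddAut X) : X →+ X)))),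
        Function.Injective φ ∧
        Set.range φ = {q | ∃ m : ℕ, 0 < m ∧ ¬ (ringChar k ∣ m) ∧ m • q = 0}) ∧
    (∀ x : (↥(fixedSub k ((σ : AddAut X) : X →+ X)) ⧸
          (AddSubgroup.map (fixedSub k ((σ : AddAut X) : X →+ X)).subtype
              (divPart (fixedSub k ((σ : AddAut X) : X →+ X)))).addSubgroupOf
            (fixedSub k ((σ : AddAut X) : X →+ X))),
        n • x = 0) := by
  classical
  have hord1 : n • σ = 0 := hord ▸ addOrderOf_nsmul_eq_zero σ
  have hker_eq : AddMonoidHom.ker (CGAux.resP (k := k) σ n) = divPart ↥(CGAux.Tfix k σ) := by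
    apply le_antisymm
    · have hS : AddMonoidHom.ker (CGAux.resP (k := k) σ n) ∈
          {H : AddSubgroup ↥(CGAux.Tfix k σ) |
            ∀ m : ℕ, 0 < m → ∀ x ∈ H, ∃ y ∈ H, m • y = x} := by
        intro m hm t htker
        have hvan : ∀ x : ↥(CGAux.Kk σ n), (t : TorusPts X k) x.1 = 0 := by
          intro x
          have hz := CGAux.vanish_of_resP_eq_zero hn t htker (QuotientAddGroup.mk x)
          rwa [CGAux.rQ_mk] at hz
        obtain ⟨s, hsK, hms⟩ := CGAux.exists_div hord1 t hvan hm.ne'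
        refine ⟨s, ?_, hms⟩
        rw [AddMonoidHom.mem_ker]
        ext p
        obtain ⟨q, hq⟩ := p
        revert hq
        refine QuotientAddGroup.induction_on q (fun x => ?_)
        intro hq
        rw [CGAux.resP_apply, CGAux.rQ_mk]
        simpa using hsK x
      exact le_iSup₂ (f := fun (H : AddSubgroup ↥(CGAux.Tfix k σ)) (_ : H ∈ _) => H) _ hS
    · rw [divPart]
      refine iSup₂_le (fun H hH => ?_)
      intro t htH
      rw [AddMonoidHom.mem_ker]
      ext p : 1
      obtain ⟨m, hm, hmp, hmq⟩ := p.2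
      obtain ⟨s, hsH, hms⟩ := hH m hm t htH
      have hp0 : m • p = 0 := Subtype.ext (by simpa using hmq)
      rw [← hms, map_nsmul]
      show m • ((CGAux.resP σ n s) p) = 0
      rw [← map_nsmul, hp0, map_zero]
  have hsub : (AddSubgroup.map (fixedSub k ((σ : AddAut X) : X →+ X)).subtype
      (divPart ↥(fixedSub k ((σ : AddAut X) : X →+ X)))).addSubgroupOf
        (fixedSub k ((σ : AddAut X) : X →+ X)) = AddMonoidHom.ker (CGAux.resP (k := k) σ n) := by
    show AddSubgroup.comap _ _ = _
    rw [AddSubgroup.comap_map_eq_self_of_injective Subtype.coe_injective]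
    exact hker_eq.symm
  haveI : Finite (CGAux.QT σ n) := CGAux.finite_QT σ n hn
  haveI : Finite ↥(CGAux.Pp k σ n) := Subtype.finite
  have hBtor : ∀ b : ↥(CGAux.Pp k σ n), ∃ m : ℕ, 0 < m ∧ ¬ ringChar k ∣ m ∧ m • b = 0 := by
    rintro ⟨b, m, hm, hmp, hmq⟩
    exact ⟨m, hm, hmp, Subtype.ext (by simpa using hmq)⟩
  obtain ⟨e2⟩ := CGAux.dual_equiv (k := k) hBtor
  let e1 := (QuotientAddGroup.quotientAddEquivOfEq hsub).trans
    (QuotientAddGroup.quotientKerEquivOfSurjective _ (CGAux.resP_surjective σ n))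
  constructor
  · refine ⟨(CGAux.Pp k σ n).subtype.comp (e2.toAddMonoidHom.comp e1.toAddMonoidHom), ?_, ?_⟩
    · intro a b h
      exact e1.injective (e2.injective (Subtype.coe_injective h))
    · ext q
      constructor
      · rintro ⟨x, rfl⟩
        exact (e2 (e1 x)).2
      · intro hq
        refine ⟨e1.symm (e2.symm ⟨q, hq⟩), ?_⟩
        simp
  · intro x
    refine QuotientAddGroup.induction_on x (fun t => ?_)
    rw [← QuotientAddGroup.mk_nsmul, QuotientAddGroup.eq_zero_iff, hsub, AddMonoidHom.mem_ker]
    ext p : 1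
    rw [map_nsmul]
    show n • ((CGAux.resP σ n t) p) = 0
    have hp0 : n • p = 0 := Subtype.ext (by simpa using CGAux.nsmul_QT_eq_zero p.1)
    rw [← map_nsmul, hp0, map_zero]
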